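/- Let Q ∈ ℝ^{n_y×n_y} be symmetric positive definite, q ∈ ℝ^{n_y}, G ∈ ℝ^{n_g×n_y}, g ∈ ℝ^{n_g}, and ρ ∈ ℝ^{n_g} with every component positive. Define H = diag(ρ)·G·Q⁻¹·Gᵀ·diag(ρ) and h = diag(ρ)·(G·Q⁻¹·Gᵀ·ρ + 2·(G·Q⁻¹·q + g)). Then the ℓ1-penalty soft-constrained problem min over y ∈ ℝ^{n_y} of (1/2)yᵀQy + yᵀq + Σᵢ ρᵢ·max(0, (Gy − g)ᵢ) has a unique minimizer y*, and for any minimizer z* of the box-constrained quadratic program min over z ∈ ℝ^{n_g} with −e ≤ z ≤ e of (1/2)zᵀHz + zᵀh, one has y* = −Q⁻¹(q + (1/2)·Gᵀ(ρ ⊙ z* + ρ)). -/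

import Mathlib

set_option maxHeartbeats 1000000

open Matrix

private lemma small_step (a b ε : ℝ) (hε : 0 < ε)
    (h : ∀ s : ℝ, 0 < s → s ≤ ε → 0 ≤ a * s + b * s ^ 2) : 0 ≤ a := by
  by_contra hc
  push_neg at hc
  have hc1 : (0:ℝ) < max b 1 := lt_of_lt_of_le one_pos (le_max_right _ _)
  have hbc : b ≤ max b 1 := le_max_left _ _
  set s : ℝ := min ε (-a / (2 * max b 1)) with hs
  have hs0 : 0 < s := lt_min hε (div_pos (neg_pos.mpr hc) (by positivity))
  have hsε : s ≤ ε := min_le_left _ _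
  have hsc : s * (2 * max b 1) ≤ -a := by
    have := min_le_right ε (-a / (2 * max b 1))
    calc s * (2 * max b 1) ≤ (-a / (2 * max b 1)) * (2 * max b 1) := by
          apply mul_le_mul_of_nonneg_right this (by positivity)
      _ = -a := by field_simp
  have hkey := h s hs0 hsε
  nlinarith [mul_le_mul_of_nonneg_right hbc (sq_nonneg s),
    mul_le_mul_of_nonneg_left hsc hs0.le, mul_pos hs0 hs0]

private lemma dot_psd {n : ℕ} {M : Matrix (Fin n) (Fin n) ℝ} (hM : M.PosSemidef)
    (x : Fin n → ℝ) : 0 ≤ x ⬝ᵥ M *ᵥ x := by simpa using hM.dotProduct_mulVec_nonneg x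

private lemma dot_pd {n : ℕ} {M : Matrix (Fin n) (Fin n) ℝ} (hM : M.PosDef)
    {x : Fin n → ℝ} (hx : x ≠ 0) : 0 < x ⬝ᵥ M *ᵥ x := by simpa using hM.dotProduct_mulVec_pos hx

private lemma dot_symm {n : ℕ} {M : Matrix (Fin n) (Fin n) ℝ} (hM : Mᵀ = M)
    (x y : Fin n → ℝ) : x ⬝ᵥ M *ᵥ y = y ⬝ᵥ M *ᵥ x := by
  rw [dotProduct_mulVec, ← mulVec_transpose, hM, dotProduct_comm]

theorem l1_penalty_recovery {ny ng : ℕ}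
    (Q : Matrix (Fin ny) (Fin ny) ℝ) (hQ : Q.PosDef)
    (q : Fin ny → ℝ) (G : Matrix (Fin ng) (Fin ny) ℝ) (g ρ : Fin ng → ℝ)
    (hρ : ∀ i, 0 < ρ i)
    (H : Matrix (Fin ng) (Fin ng) ℝ)
    (hH : H = Matrix.diagonal ρ * G * Q⁻¹ * Gᵀ * Matrix.diagonal ρ)
    (h : Fin ng → ℝ)
    (hh : h = (Matrix.diagonal ρ).mulVec
      ((G * Q⁻¹ * Gᵀ).mulVec ρ + (2:ℝ) • ((G * Q⁻¹).mulVec q + g)))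
    (f : (Fin ny → ℝ) → ℝ)
    (hf : f = fun y => (1/2) * (y ⬝ᵥ Q.mulVec y) + y ⬝ᵥ q
      + ∑ i, ρ i * max 0 ((G.mulVec y - g) i))
    (qp : (Fin ng → ℝ) → ℝ)
    (hqp : qp = fun z => (1/2) * (z ⬝ᵥ H.mulVec z) + z ⬝ᵥ h) :
    ∃ ystar : Fin ny → ℝ,
      (∀ y, f ystar ≤ f y) ∧
      (∀ y', (∀ y, f y' ≤ f y) → y' = ystar) ∧
      (∀ zstar : Fin ng → ℝ,
        (∀ i, -1 ≤ zstar i ∧ zstar i ≤ 1) →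
        (∀ z : Fin ng → ℝ, (∀ i, -1 ≤ z i ∧ z i ≤ 1) → qp zstar ≤ qp z) →
        ystar = -(Q⁻¹.mulVec (q + (1/2 : ℝ) • Gᵀ.mulVec (fun i => ρ i * zstar i + ρ i)))) := by
  have hdet : IsUnit Q.det := isUnit_iff_ne_zero.mpr hQ.det_pos.ne'
  have hQT : Qᵀ = Q := hQ.1
  have hAT : (Q⁻¹)ᵀ = Q⁻¹ := by rw [transpose_nonsing_inv, hQT]
  have hQA : Q * Q⁻¹ = 1 := mul_nonsing_inv Q hdet
  -- the candidate minimizer map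
  set Y : (Fin ng → ℝ) → (Fin ny → ℝ) :=
    fun z => -(Q⁻¹.mulVec (q + (1/2 : ℝ) • Gᵀ.mulVec (fun i => ρ i * z i + ρ i))) with hYdef
  -- KEY: for any box-minimizer zs, Y zs is a global minimizer of f
  have key : ∀ zs : Fin ng → ℝ, (∀ i, -1 ≤ zs i ∧ zs i ≤ 1) →
      (∀ z : Fin ng → ℝ, (∀ i, -1 ≤ z i ∧ z i ≤ 1) → qp zs ≤ qp z) →
      ∀ y, f (Y zs) ≤ f y := by
    intro zs hbox hopt
    obtain ⟨v, hv⟩ : ∃ v : Fin ng → ℝ, v = fun i => ρ i * zs i + ρ i := ⟨_, rfl⟩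
    obtain ⟨w, hw⟩ : ∃ w : Fin ny → ℝ, w = q + (1/2 : ℝ) • Gᵀ *ᵥ v := ⟨_, rfl⟩
    obtain ⟨ys, hys⟩ : ∃ ys : Fin ny → ℝ, ys = Y zs := ⟨_, rfl⟩
    have hysw : ys = -(Q⁻¹ *ᵥ w) := by rw [hys, hYdef, hw, hv]
    rw [← hys]
    obtain ⟨t, htdef⟩ : ∃ t : Fin ng → ℝ, t = G *ᵥ ys - g := ⟨_, rfl⟩
    have hQys : Q *ᵥ ys = -w := by
      rw [hysw, mulVec_neg, mulVec_mulVec, hQA, one_mulVec]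
    have ht : t = -((G * Q⁻¹) *ᵥ q) - (1/2:ℝ) • ((G * Q⁻¹ * Gᵀ) *ᵥ v) - g := by
      rw [htdef, hysw, mulVec_neg, mulVec_mulVec, hw, mulVec_add, mulVec_smul, mulVec_mulVec,
        Matrix.mul_assoc]
      module
    have hdiag : ∀ x : Fin ng → ℝ, diagonal ρ *ᵥ x = fun i => ρ i * x i :=
      fun x => funext fun i => mulVec_diagonal ρ x i
    -- gradient identity
    have hHz : H *ᵥ zs + h
        = diagonal ρ *ᵥ ((G * Q⁻¹ * Gᵀ) *ᵥ v + (2:ℝ) • ((G * Q⁻¹) *ᵥ q + g)) := by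
      have hv' : v = diagonal ρ *ᵥ zs + ρ := by
        rw [hdiag, hv]
        funext i
        simp
      have h1 : diagonal ρ *ᵥ ((G * Q⁻¹ * Gᵀ) *ᵥ (diagonal ρ *ᵥ zs))
          = (diagonal ρ * G * Q⁻¹ * Gᵀ * diagonal ρ) *ᵥ zs := by
        rw [mulVec_mulVec, mulVec_mulVec]
        simp only [Matrix.mul_assoc]
      rw [hH, hh, ← h1]
      conv_rhs => rw [hv']
      simp only [mulVec_add]
      abel
    have hgrad : ∀ i, (H *ᵥ zs) i + h i = ρ i * (-2 * t i) := by
      intro i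
      have h1 := congrFun hHz i
      rw [Pi.add_apply] at h1
      rw [h1, hdiag]
      have hti := congrFun ht i
      simp only [Pi.add_apply, Pi.smul_apply, Pi.sub_apply, Pi.neg_apply, smul_eq_mul] at hti ⊢
      linear_combination (2 * ρ i) * hti
    have hHT : Hᵀ = H := by
      rw [hH]
      simp [transpose_mul, Matrix.mul_assoc, hAT, hQT]
    -- one-dimensional perturbation inequality
    have hstep : ∀ (i : Fin ng) (s : ℝ), -1 ≤ zs i + s → zs i + s ≤ 1 →
        0 ≤ (ρ i * (-2 * t i)) * s + (H i i / 2) * s^2 := by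
      intro i s hlo hhi
      obtain ⟨z', hz'⟩ : ∃ z' : Fin ng → ℝ, z' = zs + Pi.single i s := ⟨_, rfl⟩
      have hfeas : ∀ j, -1 ≤ z' j ∧ z' j ≤ 1 := by
        intro j
        by_cases hj : j = i
        · subst hj
          simpa [hz', Pi.single_eq_same] using And.intro hlo hhi
        · simpa [hz', Pi.single_eq_of_ne hj] using hbox j
      have hqle := hopt _ hfeas
      simp only [hqp] at hqle
      have e1 : z' ⬝ᵥ H *ᵥ z'
          = zs ⬝ᵥ H *ᵥ zs + 2 * (s * (H *ᵥ zs) i) + H i i * s^2 := by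
        rw [hz', mulVec_add, dotProduct_add, add_dotProduct, add_dotProduct,
          dot_symm hHT zs (Pi.single i s), single_dotProduct, single_dotProduct,
          mulVec_single]
        simp only [Pi.smul_apply, col_apply, MulOpposite.smul_eq_mul_unop, MulOpposite.unop_op]
        ring
      have e2 : z' ⬝ᵥ h = zs ⬝ᵥ h + s * h i := by
        rw [hz', add_dotProduct, single_dotProduct]
      rw [e1, e2] at hqle
      have e3 : s * ((H *ᵥ zs) i + h i) = s * (ρ i * (-2 * t i)) := by
        rw [hgrad i]
      nlinarith [hqle, e3]
    -- complementarity / sign conditions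
    have hsign : ∀ i, ρ i * max 0 (t i) = 1/2 * (ρ i * (zs i + 1)) * t i := by
      intro i
      rcases lt_trichotomy (t i) 0 with hlt | heq | hgt
      · have hz : zs i = -1 := by
          by_contra hzi
          have h1 : -1 < zs i := lt_of_le_of_ne (hbox i).1 (Ne.symm hzi)
          have h2 : 0 ≤ -(ρ i * (-2 * t i)) := by
            apply small_step _ (H i i / 2) (zs i + 1) (by linarith)
            intro s hs0 hsε
            have h3 := hstep i (-s) (by linarith) (by linarith [(hbox i).2])
            nlinarith [h3]
          nlinarith [hρ i]
        rw [hz, max_eq_left hlt.le]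
        ring
      · rw [heq]
        simp
      · have hz : zs i = 1 := by
          by_contra hzi
          have h1 : zs i < 1 := lt_of_le_of_ne (hbox i).2 hzi
          have h2 : 0 ≤ ρ i * (-2 * t i) := by
            apply small_step _ (H i i / 2) (1 - zs i) (by linarith)
            intro s hs0 hsε
            have h3 := hstep i s (by linarith [(hbox i).1]) (by linarith)
            nlinarith [h3]
          nlinarith [hρ i]
        rw [hz, max_eq_right hgt.le]
        ring
    -- now prove f ys ≤ f y for all y
    intro y
    rw [hf]
    simp only [← htdef]
    have hvt : ∀ u : Fin ny → ℝ, v ⬝ᵥ (G *ᵥ u - g) = u ⬝ᵥ w * 2 - 2 * (u ⬝ᵥ q) - v ⬝ᵥ g := by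
      intro u
      rw [dotProduct_sub, dotProduct_mulVec, ← mulVec_transpose, hw, dotProduct_add,
        dotProduct_smul, smul_eq_mul, dotProduct_comm u (Gᵀ *ᵥ v)]
      ring
    -- c1 : lower bound on the penalty term, for every u
    have c1 : ∀ u : Fin ny → ℝ,
        1/2 * (v ⬝ᵥ (G *ᵥ u - g)) ≤ ∑ i, ρ i * max 0 ((G *ᵥ u - g) i) := by
      intro u
      rw [dotProduct, Finset.mul_sum]
      apply Finset.sum_le_sum
      intro i _
      have h1 := le_max_left (0:ℝ) ((G *ᵥ u - g) i)
      have h2 := le_max_right (0:ℝ) ((G *ᵥ u - g) i)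
      have hb := hbox i
      have hρi := hρ i
      simp only [hv]
      rcases le_total 0 ((G *ᵥ u - g) i) with hc | hc
      · have hint1 : 0 ≤ (1 - zs i) * ρ i * ((G *ᵥ u - g) i) :=
          mul_nonneg (mul_nonneg (by linarith [hb.2]) hρi.le) hc
        have hint2 : ρ i * ((G *ᵥ u - g) i) ≤ ρ i * max 0 ((G *ᵥ u - g) i) :=
          mul_le_mul_of_nonneg_left h2 hρi.le
        nlinarith [hint1, hint2]
      · have hint1 : 0 ≤ (zs i + 1) * ρ i * (-((G *ᵥ u - g) i)) :=
          mul_nonneg (mul_nonneg (by linarith [hb.1]) hρi.le) (neg_nonneg.mpr hc)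
        have hint2 : 0 ≤ ρ i * max 0 ((G *ᵥ u - g) i) := mul_nonneg hρi.le h1
        nlinarith [hint1, hint2]
    -- c2 : equality of the penalty term at ys
    have c2 : 1/2 * (v ⬝ᵥ t) = ∑ i, ρ i * max 0 (t i) := by
      rw [dotProduct, Finset.mul_sum]
      refine Finset.sum_congr rfl fun i _ => ?_
      have hsi := hsign i
      simp only [hv]
      linear_combination -hsi
    -- c3 : quadratic comparison
    have c3 : 1/2 * (y ⬝ᵥ Q *ᵥ y) + y ⬝ᵥ w - (1/2 * (ys ⬝ᵥ Q *ᵥ ys) + ys ⬝ᵥ w)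
        = 1/2 * ((y - ys) ⬝ᵥ Q *ᵥ (y - ys)) := by
      have hexp : (y - ys) ⬝ᵥ Q *ᵥ (y - ys)
          = y ⬝ᵥ Q *ᵥ y - 2 * (y ⬝ᵥ Q *ᵥ ys) + ys ⬝ᵥ Q *ᵥ ys := by
        rw [sub_dotProduct, mulVec_sub, dotProduct_sub, dotProduct_sub,
          dot_symm hQT ys y]
        ring
      have hyw : y ⬝ᵥ w = -(y ⬝ᵥ Q *ᵥ ys) := by
        rw [hQys, dotProduct_neg, neg_neg]
      have hysw' : ys ⬝ᵥ w = -(ys ⬝ᵥ Q *ᵥ ys) := by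
        rw [hQys, dotProduct_neg, neg_neg]
      rw [hexp, hyw, hysw']
      ring
    have hpsd : 0 ≤ (y - ys) ⬝ᵥ Q *ᵥ (y - ys) := dot_psd hQ.posSemidef _
    have hc2' := hvt ys
    have hc1' := hvt y
    rw [← htdef] at hc2'
    have key1 := c1 y
    rw [hc1'] at key1
    rw [hc2'] at c2
    -- combine everything
    linarith [key1, c2, c3, hpsd]
  -- strict convexity: minimizers are unique
  have uniq : ∀ y1 y2 : Fin ny → ℝ, (∀ y, f y1 ≤ f y) → (∀ y, f y2 ≤ f y) → y1 = y2 := by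
    intro y1 y2 hm1 hm2
    by_contra hne
    have hpos : 0 < (y1 - y2) ⬝ᵥ Q *ᵥ (y1 - y2) := dot_pd hQ (sub_ne_zero.mpr hne)
    set m : Fin ny → ℝ := (1/2 : ℝ) • (y1 + y2) with hm
    have hq1 : m ⬝ᵥ Q *ᵥ m = 1/4 * (y1 ⬝ᵥ Q *ᵥ y1) + 1/2 * (y1 ⬝ᵥ Q *ᵥ y2)
        + 1/4 * (y2 ⬝ᵥ Q *ᵥ y2) := by
      rw [hm, smul_dotProduct, mulVec_smul, dotProduct_smul, add_dotProduct, mulVec_add,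
        dotProduct_add, dotProduct_add, dot_symm hQT y2 y1]
      simp only [smul_eq_mul]
      ring
    have hq2 : (y1 - y2) ⬝ᵥ Q *ᵥ (y1 - y2) = (y1 ⬝ᵥ Q *ᵥ y1) - 2 * (y1 ⬝ᵥ Q *ᵥ y2)
        + (y2 ⬝ᵥ Q *ᵥ y2) := by
      rw [sub_dotProduct, mulVec_sub, dotProduct_sub, dotProduct_sub, dot_symm hQT y2 y1]
      ring
    have hlin : m ⬝ᵥ q = 1/2 * (y1 ⬝ᵥ q) + 1/2 * (y2 ⬝ᵥ q) := by
      rw [hm, smul_dotProduct, add_dotProduct]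
      simp only [smul_eq_mul]
      ring
    have hpen : ∑ i, ρ i * max 0 ((G *ᵥ m - g) i)
        ≤ 1/2 * ∑ i, ρ i * max 0 ((G *ᵥ y1 - g) i)
          + 1/2 * ∑ i, ρ i * max 0 ((G *ᵥ y2 - g) i) := by
      rw [Finset.mul_sum, Finset.mul_sum, ← Finset.sum_add_distrib]
      apply Finset.sum_le_sum
      intro i _
      have hGm : (G *ᵥ m - g) i = 1/2 * ((G *ᵥ y1 - g) i) + 1/2 * ((G *ᵥ y2 - g) i) := by
        rw [hm, mulVec_smul, mulVec_add]
        simp only [Pi.sub_apply, Pi.smul_apply, Pi.add_apply, smul_eq_mul]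
        ring
      rw [hGm]
      have h1 := le_max_left (0:ℝ) ((G *ᵥ y1 - g) i)
      have h2 := le_max_right (0:ℝ) ((G *ᵥ y1 - g) i)
      have h3 := le_max_left (0:ℝ) ((G *ᵥ y2 - g) i)
      have h4 := le_max_right (0:ℝ) ((G *ᵥ y2 - g) i)
      have hmx : max 0 (1/2 * ((G *ᵥ y1 - g) i) + 1/2 * ((G *ᵥ y2 - g) i))
          ≤ 1/2 * max 0 ((G *ᵥ y1 - g) i) + 1/2 * max 0 ((G *ᵥ y2 - g) i) :=
        max_le (by linarith) (by linarith)
      nlinarith [hρ i, hmx, le_max_left (0:ℝ) ((G *ᵥ m - g) i)]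
    have hf12 : f y1 = f y2 := le_antisymm (hm1 y2) (hm2 y1)
    have hcontra : f m < f y1 := by
      rw [hf] at hf12 ⊢
      simp only at hf12 ⊢
      linarith [hpos, hq1, hq2, hlin, hpen]
    exact absurd (hm1 m) (not_le.mpr hcontra)
  -- existence of a box minimizer
  obtain ⟨zs0, hzs0mem, hzs0min⟩ :
      ∃ zs0 ∈ Set.Icc (fun _ => (-1:ℝ) : Fin ng → ℝ) (fun _ => 1), IsMinOn qp _ zs0 := by
    have hcont : Continuous qp := by
      rw [hqp]
      apply Continuous.add
      · apply continuous_const.mul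
        simp only [dotProduct, mulVec]
        exact continuous_finset_sum _ fun i _ => (continuous_apply i).mul
          (continuous_finset_sum _ fun j _ => continuous_const.mul (continuous_apply j))
      · simp only [dotProduct]
        exact continuous_finset_sum _ fun i _ => (continuous_apply i).mul continuous_const
    exact isCompact_Icc.exists_isMinOn
      (Set.nonempty_Icc.mpr (fun i => by norm_num)) hcont.continuousOn
  have hzs0box : ∀ i, -1 ≤ zs0 i ∧ zs0 i ≤ 1 := by
    obtain ⟨h1, h2⟩ := hzs0mem
    exact fun i => ⟨h1 i, h2 i⟩
  have hzs0opt : ∀ z : Fin ng → ℝ, (∀ i, -1 ≤ z i ∧ z i ≤ 1) → qp zs0 ≤ qp z := by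
    intro z hz
    exact isMinOn_iff.mp hzs0min z (Set.mem_Icc.mpr ⟨fun i => (hz i).1, fun i => (hz i).2⟩)
  have hmin0 := key zs0 hzs0box hzs0opt
  refine ⟨Y zs0, hmin0, fun y' hy' => uniq y' (Y zs0) hy' hmin0, ?_⟩
  intro zs hbox hopt
  exact (uniq (Y zs) (Y zs0) (key zs hbox hopt) hmin0).symm
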